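/- Let L_A > 0 and μ_A > 0, and assume f is L_A-smooth and μ_A-strongly convex with respect to the atomic norm on lin(A). Let Z be a Borel probability measure on H supported in A, and let δ̂ ∈ (0,1] satisfy ∫ ⟨d, z⟩² dZ(z) ≥ δ̂² · (sup_{z∈A} ⟨d, z⟩)² for every d in the closed linear span of A. Let x⋆ ∈ lin(A) be a minimizer of f over lin(A). Then for every x ∈ lin(A), with z a random vector of law Z and x⁺ := x − (⟨∇f(x), z⟩/L_A)·z, one has E[f(x⁺)] − f(x⋆) ≤ (1 − δ̂²·μ_A/L_A)·(f(x) − f(x⋆)). -/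

import Mathlib

open Submodule Set Pointwise RealInnerProductSpace MeasureTheory

set_option maxHeartbeats 1000000 in
/-- Theorem 5, Part 2, one-step form: expected linear decrease of
random pursuit for `f` that is `L_A`-smooth and `μ_A`-strongly convex w.r.t. the
atomic norm on `lin(A)`, where the atom is sampled from a distribution `Z` on `A`
with sampling quality `δ̂`. -/
theorem stmt_4 {H : Type*} [NormedAddCommGroup H] [InnerProductSpace ℝ H] [CompleteSpace H]
    [MeasurableSpace H] [BorelSpace H]
    (A : Set H) (hA : IsCompact A) (hsym : ∀ z ∈ A, -z ∈ A)
    (f : H → ℝ) (f' : H → H) (hgrad : ∀ x, HasGradientAt f (f' x) x)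
    (hconv : ConvexOn ℝ univ f)
    (habs : ∀ x ∈ span ℝ A, ∃ c : ℝ, 0 < c ∧ x ∈ c • convexHull ℝ A)
    (hpos : ∀ x ∈ span ℝ A, x ≠ 0 → 0 < gauge (convexHull ℝ A) x)
    (LA μA : ℝ) (hLA : 0 < LA) (hμA : 0 < μA)
    (hsmooth : ∀ x ∈ span ℝ A, ∀ z ∈ span ℝ A, gauge (convexHull ℝ A) z = 1 →
      ∀ γ : ℝ, 0 < γ → f (x + γ • z) ≤ f x + γ * ⟪f' x, z⟫ + LA / 2 * γ ^ 2)
    (hstrong : ∀ x ∈ span ℝ A, ∀ y ∈ span ℝ A,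
      f x + ⟪f' x, y - x⟫ + μA / 2 * gauge (convexHull ℝ A) (y - x) ^ 2 ≤ f y)
    (Z : Measure H) [IsProbabilityMeasure Z] (hZA : Z Aᶜ = 0)
    (δhat : ℝ) (hδ0 : 0 < δhat) (hδ1 : δhat ≤ 1)
    (hδhat : ∀ d ∈ (span ℝ A).topologicalClosure,
      δhat ^ 2 * (sSup ((fun w => ⟪d, w⟫) '' A)) ^ 2 ≤ ∫ z, ⟪d, z⟫ ^ 2 ∂Z)
    (xs : H) (hxs : xs ∈ span ℝ A) (hmin : ∀ y ∈ span ℝ A, f xs ≤ f y) :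
    ∀ x ∈ span ℝ A,
      (∫ z, f (x - (⟪f' x, z⟫ / LA) • z) ∂Z) - f xs ≤
        (1 - δhat ^ 2 * μA / LA) * (f x - f xs) := by
  intro x hx
  set C : Set H := convexHull ℝ A with hC
  set g : H := f' x with hgdef
  -- A is nonempty
  have hAne : A.Nonempty := by
    by_contra h
    rw [not_nonempty_iff_eq_empty] at h
    subst h
    simp only [compl_empty] at hZA
    have := measure_univ (μ := Z)
    rw [hZA] at this
    exact zero_ne_one this
  -- f is continuous
  have fcont : Continuous f :=
    continuous_iff_continuousAt.2 fun y => (hgrad y).hasFDerivAt.continuousAt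
  -- A and C are symmetric
  have hAeq : -A = A := by
    apply Subset.antisymm
    · intro w hw
      simpa using hsym (-w) (Set.mem_neg.1 hw)
    · intro w hw
      rw [Set.mem_neg]
      exact hsym w hw
  have hCsym : ∀ w ∈ C, -w ∈ C := by
    intro w hw
    have : -C = C := by rw [hC, ← convexHull_neg, hAeq]
    rw [← this, Set.mem_neg, neg_neg]
    exact hw
  have hgauge_neg : ∀ u : H, gauge C (-u) = gauge C u := gauge_neg hCsym
  -- The dual quantity S for the gradient g
  set S : ℝ := sSup ((fun w => ⟪g, w⟫) '' A) with hSdef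
  have hinner_cont : Continuous fun w : H => ⟪g, w⟫ :=
    continuous_const.inner continuous_id
  have hbdd : BddAbove ((fun w => ⟪g, w⟫) '' A) :=
    (hA.image hinner_cont).bddAbove
  have hS0 : 0 ≤ S := by
    obtain ⟨z0, hz0⟩ := hAne
    have h1 : ⟪g, z0⟫ ≤ S := le_csSup hbdd ⟨z0, hz0, rfl⟩
    have h2 : ⟪g, -z0⟫ ≤ S := le_csSup hbdd ⟨-z0, hsym z0 hz0, rfl⟩
    rw [inner_neg_right] at h2
    linarith
  -- Duality: ⟪g, u⟫ ≤ gauge C u * S for u in the span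
  have dual : ∀ u ∈ span ℝ A, ⟪g, u⟫ ≤ gauge C u * S := by
    intro u hu
    have key : ∀ c : ℝ, gauge C u < c → ⟪g, u⟫ ≤ c * S := by
      intro c hc
      rw [gauge_def] at hc
      obtain ⟨c0, hc0, hmemc⟩ := habs u hu
      have hne : ({r ∈ Set.Ioi (0:ℝ) | u ∈ r • C}).Nonempty := ⟨c0, hc0, hmemc⟩
      have hbb : BddBelow {r ∈ Set.Ioi (0:ℝ) | u ∈ r • C} :=
        ⟨0, fun r hr => le_of_lt hr.1⟩
      obtain ⟨r, ⟨hr0, hru⟩, hrc⟩ := (csInf_lt_iff hbb hne).1 hc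
      obtain ⟨v, hv, hvu⟩ := Set.mem_smul_set.1 hru
      have hvS : ⟪g, v⟫ ≤ S := by
        have hsub : C ⊆ {w : H | ⟪g, w⟫ ≤ S} := by
          rw [hC]
          apply convexHull_min
          · intro w hw
            exact le_csSup hbdd ⟨w, hw, rfl⟩
          · intro a ha b hb p q hp hq hpq
            simp only [Set.mem_setOf_eq] at ha hb ⊢
            rw [inner_add_right, real_inner_smul_right, real_inner_smul_right]
            nlinarith
        exact hsub hv
      have : ⟪g, u⟫ = r * ⟪g, v⟫ := by rw [← hvu, real_inner_smul_right]
      rw [this]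
      have hr0' : (0:ℝ) < r := hr0
      nlinarith
    rcases hS0.eq_or_lt with hS | hS
    · have := key (gauge C u + 1) (by linarith)
      rw [← hS] at this ⊢
      simpa using this
    · apply le_of_forall_pos_le_add
      intro ε hε
      have := key (gauge C u + ε / S) (by have := div_pos hε hS; linarith)
      calc ⟪g, u⟫ ≤ (gauge C u + ε / S) * S := this
        _ = gauge C u * S + ε := by field_simp
  -- Pointwise descent inequality for atoms
  have key1 : ∀ z ∈ A, f (x - (⟪g, z⟫ / LA) • z) ≤ f x - ⟪g, z⟫ ^ 2 / (2 * LA) := by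
    intro z hz
    by_cases hs : ⟪g, z⟫ = 0
    · rw [hs]
      simp [hLA.ne']
    · have hz0 : z ≠ 0 := by
        intro h
        apply hs
        rw [h, inner_zero_right]
      have hzspan : z ∈ span ℝ A := subset_span hz
      have ht : 0 < gauge C z := hpos z hzspan hz0
      have ht1 : gauge C z ≤ 1 := gauge_le_one_of_mem (subset_convexHull ℝ A hz)
      set t : ℝ := gauge C z with htdef
      set s : ℝ := ⟪g, z⟫ with hsdef
      rcases lt_or_gt_of_ne hs with hneg | hposs
      · -- s < 0 : move in direction z/t
        set z' : H := t⁻¹ • z with hz'def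
        have hz'mem : z' ∈ span ℝ A := Submodule.smul_mem _ _ hzspan
        have hz'gauge : gauge C z' = 1 := by
          rw [hz'def, gauge_smul_of_nonneg (by positivity : (0:ℝ) ≤ t⁻¹)]
          simp [inv_mul_cancel₀ ht.ne']
          exact inv_mul_cancel₀ ht.ne'
        set γ : ℝ := -s * t / LA with hγdef
        have hγ : 0 < γ := by
          apply div_pos _ hLA
          nlinarith
        have hsm := hsmooth x hx z' hz'mem hz'gauge γ hγ
        have heq : x + γ • z' = x - (s / LA) • z := by
          rw [hz'def, hγdef]
          match_scalars
          · norm_num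
          · rw [show -s * t / LA * (t⁻¹ * 1) = -(s / LA * 1) * (t * t⁻¹) from by ring,
              mul_inv_cancel₀ ht.ne', mul_one]
        rw [heq] at hsm
        have hip : ⟪g, z'⟫ = t⁻¹ * s := by
          rw [hz'def, real_inner_smul_right]
        rw [hip] at hsm
        have e1 : γ * (t⁻¹ * s) = -(s ^ 2) / LA := by
          rw [hγdef]; field_simp
        have e2 : LA / 2 * γ ^ 2 = s ^ 2 * t ^ 2 / (2 * LA) := by
          rw [hγdef]; field_simp
        rw [e1, e2] at hsm
        have hle : s ^ 2 * t ^ 2 / (2 * LA) ≤ s ^ 2 / (2 * LA) := by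
          apply div_le_div_of_nonneg_right _ (by positivity)
          have ht2 : t ^ 2 ≤ 1 := by nlinarith
          nlinarith [mul_le_mul_of_nonneg_left ht2 (sq_nonneg s)]
        calc f (x - (s / LA) • z) ≤ f x + -(s ^ 2) / LA + s ^ 2 * t ^ 2 / (2 * LA) := hsm
          _ ≤ f x - s ^ 2 / (2 * LA) := by
              have : -(s ^ 2) / LA + s ^ 2 / (2 * LA) = -(s ^ 2 / (2 * LA)) := by
                field_simp; ring
              nlinarith [hle]
      · -- s > 0 : move in direction -z/t
        set z' : H := t⁻¹ • (-z) with hz'def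
        have hz'mem : z' ∈ span ℝ A :=
          Submodule.smul_mem _ _ (Submodule.neg_mem _ hzspan)
        have hz'gauge : gauge C z' = 1 := by
          rw [hz'def, gauge_smul_of_nonneg (by positivity : (0:ℝ) ≤ t⁻¹), hgauge_neg]
          simp [inv_mul_cancel₀ ht.ne']
          exact inv_mul_cancel₀ ht.ne'
        set γ : ℝ := s * t / LA with hγdef
        have hγ : 0 < γ := by
          apply div_pos _ hLA
          nlinarith
        have hsm := hsmooth x hx z' hz'mem hz'gauge γ hγ
        have heq : x + γ • z' = x - (s / LA) • z := by
          rw [hz'def, hγdef]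
          match_scalars
          · norm_num
          · rw [show s * t / LA * (t⁻¹ * -1) = -(s / LA * 1) * (t * t⁻¹) from by ring,
              mul_inv_cancel₀ ht.ne', mul_one]
        rw [heq] at hsm
        have hip : ⟪g, z'⟫ = -(t⁻¹ * s) := by
          rw [hz'def, real_inner_smul_right, inner_neg_right]
          ring
        rw [hip] at hsm
        have e1 : γ * -(t⁻¹ * s) = -(s ^ 2) / LA := by
          rw [hγdef]; field_simp
        have e2 : LA / 2 * γ ^ 2 = s ^ 2 * t ^ 2 / (2 * LA) := by
          rw [hγdef]; field_simp
        rw [e1, e2] at hsm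
        have hle : s ^ 2 * t ^ 2 / (2 * LA) ≤ s ^ 2 / (2 * LA) := by
          apply div_le_div_of_nonneg_right _ (by positivity)
          have ht2 : t ^ 2 ≤ 1 := by nlinarith
          nlinarith [mul_le_mul_of_nonneg_left ht2 (sq_nonneg s)]
        calc f (x - (s / LA) • z) ≤ f x + -(s ^ 2) / LA + s ^ 2 * t ^ 2 / (2 * LA) := hsm
          _ ≤ f x - s ^ 2 / (2 * LA) := by
              have : -(s ^ 2) / LA + s ^ 2 / (2 * LA) = -(s ^ 2 / (2 * LA)) := by
                field_simp; ring
              nlinarith [hle]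
  -- Measure-theoretic setup
  have hAmeas : MeasurableSet A := hA.isClosed.measurableSet
  have haeA : ∀ᵐ z ∂Z, z ∈ A := by
    rw [MeasureTheory.ae_iff]
    exact hZA
  have hrestrict : Z.restrict A = Z := Measure.restrict_eq_self_of_ae_mem haeA
  have hφcont : Continuous fun z : H => f (x - (⟪g, z⟫ / LA) • z) := by
    apply fcont.comp
    exact continuous_const.sub ((hinner_cont.div_const LA).smul continuous_id)
  have hφint : Integrable (fun z : H => f (x - (⟪g, z⟫ / LA) • z)) Z := by
    rw [← hrestrict]
    exact hφcont.continuousOn.integrableOn_compact hA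
  have hψcont : Continuous fun z : H => ⟪g, z⟫ ^ 2 := hinner_cont.pow 2
  have hψint : Integrable (fun z : H => ⟪g, z⟫ ^ 2) Z := by
    rw [← hrestrict]
    exact hψcont.continuousOn.integrableOn_compact hA
  -- Integrate the pointwise bound
  have hmono : (∫ z, f (x - (⟪g, z⟫ / LA) • z) ∂Z) ≤
      ∫ z, (f x - ⟪g, z⟫ ^ 2 / (2 * LA)) ∂Z := by
    apply integral_mono_ae hφint ((integrable_const _).sub (hψint.div_const _))
    filter_upwards [haeA] with z hz using key1 z hz
  have hval : (∫ z, (f x - ⟪g, z⟫ ^ 2 / (2 * LA)) ∂Z) =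
      f x - (∫ z, ⟪g, z⟫ ^ 2 ∂Z) / (2 * LA) := by
    rw [integral_sub (integrable_const _) (hψint.div_const _), integral_const,
      integral_div]
    simp
  -- Projection onto the closure of the span to apply hδhat
  set K := (span ℝ A).topologicalClosure with hKdef
  haveI : CompleteSpace K := (Submodule.isClosed_topologicalClosure _).completeSpace_coe
  set d : H := (orthogonalProjection K g : H) with hddef
  have hdK : d ∈ K := SetLike.coe_mem _
  have hAK : A ⊆ (K : Set H) := fun z hz =>
    Submodule.le_topologicalClosure _ (subset_span hz)
  have hgd : ∀ w ∈ K, ⟪g, w⟫ = ⟪d, w⟫ := by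
    intro w hw
    have h0 : ⟪g - d, w⟫ = 0 := K.starProjection_inner_eq_zero g w hw
    rw [inner_sub_left] at h0
    linarith
  have himg : (fun w => ⟪d, w⟫) '' A = (fun w => ⟪g, w⟫) '' A :=
    Set.image_congr fun w hw => (hgd w (hAK hw)).symm
  have hint_eq : (∫ z, ⟪d, z⟫ ^ 2 ∂Z) = ∫ z, ⟪g, z⟫ ^ 2 ∂Z := by
    apply integral_congr_ae
    filter_upwards [haeA] with z hz
    rw [hgd z (hAK hz)]
  have hδ' : δhat ^ 2 * S ^ 2 ≤ ∫ z, ⟪g, z⟫ ^ 2 ∂Z := by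
    have := hδhat d hdK
    rw [himg, hint_eq] at this
    exact this
  -- Strong convexity gives the gap bound
  have hgap : 2 * μA * (f x - f xs) ≤ S ^ 2 := by
    have hst := hstrong x hx xs hxs
    set r : ℝ := gauge C (xs - x) with hrdef
    have hr0 : 0 ≤ r := gauge_nonneg _
    have hinner : ⟪g, x - xs⟫ ≤ r * S := by
      have h1 := dual (x - xs) (Submodule.sub_mem _ hx hxs)
      have h2 : gauge C (x - xs) = r := by
        rw [hrdef, ← hgauge_neg (xs - x), neg_sub]
      rwa [h2] at h1
    have h3 : ⟪g, xs - x⟫ = -⟪g, x - xs⟫ := by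
      rw [← inner_neg_right, neg_sub]
    have h4 : f x - f xs ≤ r * S - μA / 2 * r ^ 2 := by
      rw [h3] at hst
      linarith
    nlinarith [sq_nonneg (S - μA * r)]
  have hfx : 0 ≤ f x - f xs := by linarith [hmin x hx]
  -- Combine everything
  have hIle : δhat ^ 2 * (2 * μA * (f x - f xs)) ≤ ∫ z, ⟪g, z⟫ ^ 2 ∂Z :=
    le_trans (mul_le_mul_of_nonneg_left hgap (sq_nonneg δhat)) hδ'
  have hdiv : δhat ^ 2 * μA / LA * (f x - f xs) ≤ (∫ z, ⟪g, z⟫ ^ 2 ∂Z) / (2 * LA) := by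
    rw [div_mul_eq_mul_div, div_le_div_iff₀ hLA (by positivity : (0:ℝ) < 2 * LA)]
    nlinarith
  have expand : (1 - δhat ^ 2 * μA / LA) * (f x - f xs) =
      (f x - f xs) - δhat ^ 2 * μA / LA * (f x - f xs) := by ring
  rw [expand]
  have := hmono.trans (le_of_eq hval)
  linarith
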